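/- Let G be a finite graph of diameter at most 2 in which all first-round color refinement colors C_1(v) are pairwise distinct. Then the isomorphism type of G is determined by the color C_4(v) of any single vertex v; more precisely, for any vertex v, the fourth-round color C_4(v) determines the edge set of the graph G' on vertex set {C_1(w) : w ∈ V(G)} isomorphic to G via w ↦ C_1(w). -/

import Mathlib

/-- Codomain of the round-`r` color refinement coloring. -/
def ColorType : ℕ → Type
  | 0 => ℕ
  | r + 1 => Multiset (ColorType r)

/-- The color refinement colorings: `C 0 x = deg x` and `C (r+1) x` is the
multiset of round-`r` colors of the neighbors of `x`. -/
def CR {V : Type*} [Fintype V] (G : SimpleGraph V) [DecidableRel G.Adj] :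
    (r : ℕ) → V → ColorType r
  | 0, x => G.degree x
  | r + 1, x => (G.neighborFinset x).val.map (CR G r)

/-- The edge set of the relabeled copy `G'` of `G` on the vertex set
`{C₁(w) : w ∈ V(G)}`, where `C₁(u)` and `C₁(w)` are adjacent iff `u ~ w`. -/
def colorEdges {V : Type*} [Fintype V] (G : SimpleGraph V) [DecidableRel G.Adj] :
    Set (Sym2 (ColorType 1)) :=
  {e | ∃ u u' : V, G.Adj u u' ∧ e = s(CR G 1 u, CR G 1 u')}

/-- `ColorType 2 → ColorType 1`: forget one level by taking cards. -/
def mapc : Multiset (Multiset ℕ) → Multiset ℕ := fun c => c.map Multiset.card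

def recon4 (c4 : Multiset (Multiset (Multiset (Multiset ℕ)))) : Set (Sym2 (Multiset ℕ)) :=
  {e | ∃ c3 ∈ c4, ∃ c2 : Multiset (Multiset ℕ),
      (c2 = c3.map mapc ∨ c2 ∈ c3) ∧ ∃ a ∈ c2, e = s(mapc c2, a)}

section
variable {V : Type*} [Fintype V] (G : SimpleGraph V) [DecidableRel G.Adj]

lemma CR_succ (r : ℕ) (x : V) :
    CR G (r+1) x = (G.neighborFinset x).val.map (CR G r) := rfl

lemma mem_CR_succ (r : ℕ) (x : V) (a : ColorType r) :
    a ∈ (G.neighborFinset x).val.map (CR G r) ↔ ∃ y, G.Adj x y ∧ CR G r y = a := by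
  simp [Multiset.mem_map, SimpleGraph.mem_neighborFinset]

lemma card_CR1 (z : V) : Multiset.card (CR G 1 z) = CR G 0 z := by
  show Multiset.card ((G.neighborFinset z).val.map (CR G 0)) = G.degree z
  rw [Multiset.card_map]
  rfl

lemma mapc_CR2 (z : V) : mapc (CR G 2 z) = CR G 1 z := by
  show ((G.neighborFinset z).val.map (CR G 1)).map Multiset.card
      = (G.neighborFinset z).val.map (CR G 0)
  erw [Multiset.map_map]
  exact Multiset.map_congr rfl fun y _ => card_CR1 G y

lemma map_mapc_CR3 (u : V) : (CR G 3 u : Multiset (Multiset (Multiset ℕ))).map mapc = CR G 2 u := by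
  show ((G.neighborFinset u).val.map (CR G 2)).map mapc
      = (G.neighborFinset u).val.map (CR G 1)
  erw [Multiset.map_map]
  exact Multiset.map_congr rfl fun y _ => mapc_CR2 G y

end

/-- For a finite graph `G` of diameter at most `2` whose first-round color
refinement colors are pairwise distinct, the isomorphism type of `G` is
determined by the fourth-round color `C₄(v)` of any single vertex `v`: there is
a reconstruction function that recovers from `C₄(v)` the edge set of the copy
`G'` of `G` on the vertex set `{C₁(w) : w ∈ V(G)}` (isomorphic to `G` via
`w ↦ C₁(w)`). -/
theorem C4_determines_graph :
    ∃ recon : ColorType 4 → Set (Sym2 (ColorType 1)),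
      ∀ (V : Type) [Fintype V] (G : SimpleGraph V) [DecidableRel G.Adj],
        (∀ x y : V, x ≠ y → G.Adj x y ∨ ∃ z, G.Adj x z ∧ G.Adj z y) →
        Function.Injective (CR G 1) →
        ∀ v : V, recon (CR G 4 v) = colorEdges G := by
  refine ⟨recon4, ?_⟩
  intro V _ G _ hdiam _ v
  ext e
  constructor
  · rintro ⟨c3, hc3, c2, hc2, a, ha, he⟩
    erw [show (CR G 4 v : ColorType 4) = (G.neighborFinset v).val.map (CR G 3) from rfl,
      mem_CR_succ] at hc3
    obtain ⟨u, huv, rfl⟩ := hc3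
    -- find w with c2 = CR G 2 w and w a real vertex
    obtain ⟨w, hw⟩ : ∃ w : V, c2 = CR G 2 w := by
      rcases hc2 with h | h
      · exact ⟨u, by rw [h, map_mapc_CR3]⟩
      · erw [show (CR G 3 u : ColorType 3) = (G.neighborFinset u).val.map (CR G 2) from rfl,
          mem_CR_succ] at h
        obtain ⟨w, _, rfl⟩ := h
        exact ⟨w, rfl⟩
    subst hw
    erw [show (CR G 2 w : ColorType 2) = (G.neighborFinset w).val.map (CR G 1) from rfl,
      mem_CR_succ] at ha
    obtain ⟨w', hww', rfl⟩ := ha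
    refine ⟨w, w', hww', ?_⟩
    rw [he, mapc_CR2]
    exact rfl
  · rintro ⟨u, u', huu', rfl⟩
    -- we must exhibit c3 ∈ CR G 4 v containing/yielding CR G 2 u
    have key : ∃ c3 : Multiset (Multiset (Multiset ℕ)),
        c3 ∈ ((G.neighborFinset v).val.map (CR G 3) :
            Multiset (Multiset (Multiset (Multiset ℕ)))) ∧
        ((CR G 2 u : Multiset (Multiset ℕ)) = c3.map mapc ∨
          (CR G 2 u : Multiset (Multiset ℕ)) ∈ c3) := by
      by_cases huv : u = v
      · subst huv
        refine ⟨CR G 3 u', (mem_CR_succ G 3 u _).2 ⟨u', huu', rfl⟩, Or.inr ?_⟩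
        exact (mem_CR_succ G 2 u' _).2 ⟨u, huu'.symm, rfl⟩
      · rcases hdiam v u (Ne.symm huv) with hvu | ⟨z, hvz, hzu⟩
        · exact ⟨CR G 3 u, (mem_CR_succ G 3 v _).2 ⟨u, hvu, rfl⟩,
            Or.inl (map_mapc_CR3 G u).symm⟩
        · exact ⟨CR G 3 z, (mem_CR_succ G 3 v _).2 ⟨z, hvz, rfl⟩,
            Or.inr ((mem_CR_succ G 2 z _).2 ⟨u, hzu, rfl⟩)⟩
    obtain ⟨c3, hc3, hc2⟩ := key
    refine ⟨c3, hc3, CR G 2 u, hc2, CR G 1 u', ?_, ?_⟩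
    · exact (mem_CR_succ G 1 u _).2 ⟨u', huu', rfl⟩
    · exact congrArg (fun a => s(a, CR G 1 u')) (mapc_CR2 G u).symm
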